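/- arXiv:2512.16691 — 2 statements merged into one kernel-verified Lean document; each statement's English description precedes it below -/
import Mathlib

section
/- Let T and T' be unrooted binary phylogenetic trees on a taxon set X that have an interrupted 4-chain (a,b,c,d) with interrupter-subtree taxon set B, and let F be an agreement forest for T and T' with a block U such that {a,b,c,d} ⊆ U. Then U ∩ B = ∅; consequently the embedding T[U] does not use the interrupter edge. -/
/-!
Common definitions for formalizing statements about maximum agreement forests
of unrooted binary phylogenetic trees.

An unrooted binary phylogenetic forest on a taxon set `X` is modelled as a
finite acyclic simple graph together with a labelling of taxa by vertices,
such that the vertices of degree ≤ 1 are exactly the (injectively) labelled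
leaves and every other vertex has degree 3.  A tree is a connected forest.
Two phylogenetic trees on the same taxon set are regarded as equal when there
is a label-preserving isomorphism; accordingly, the condition `T|U = T'|U`
(equality of the restrictions obtained by suppressing degree-2 vertices) is
encoded by the classical equivalent condition that `T` and `T'` induce the
same quartet topologies on `U` (for binary trees on a common leaf set,
equality of restrictions is equivalent to agreement of all quartets, where a
quartet `wx|yz` holds iff the path from `w` to `x` is vertex-disjoint from
the path from `y` to `z`).
-/

namespace Phylo

/-- An unrooted binary phylogenetic forest on the taxon set `X`:
a disjoint union of unrooted binary phylogenetic trees whose leaf (taxon)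
sets partition `X`. -/
structure PhyloForest (α : Type) (X : Finset α) where
  /-- the vertex type -/
  V : Type
  /-- the vertex set is finite -/
  fintV : Fintype V
  /-- the underlying simple graph -/
  G : SimpleGraph V
  /-- the graph is acyclic -/
  acyclic : G.IsAcyclic
  /-- the labelling of taxa by vertices (only its values on `X` matter) -/
  label : α → V
  /-- taxa are labelled injectively -/
  label_injOn : Set.InjOn label (↑X : Set α)
  /-- the labelled vertices are exactly the vertices of degree ≤ 1
  (leaves; a degree-0 vertex is a single-vertex tree of the forest) -/
  leaves_eq : label '' (↑X : Set α) = {v : V | (G.neighborSet v).ncard ≤ 1}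
  /-- every unlabelled (internal) vertex has degree 3 -/
  internal_deg : ∀ v : V, v ∉ label '' (↑X : Set α) → (G.neighborSet v).ncard = 3

/-- An unrooted binary phylogenetic tree is a connected phylogenetic forest. -/
def PhyloForest.IsTree {α : Type} {X : Finset α} (A : PhyloForest α X) : Prop :=
  A.G.Connected

/-- The unique neighbour of a leaf `ℓ` (an arbitrary neighbour in general;
for a leaf of a phylogenetic forest the neighbour is unique). -/
noncomputable def parentIn {V : Type} (G : SimpleGraph V) (ℓ : V) : V :=
  letI := Classical.dec (∃ w, G.Adj ℓ w)
  if h : ∃ w, G.Adj ℓ w then h.choose else ℓ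

/-- `p_x`, the unique neighbour of the leaf labelled `x`. -/
noncomputable def PhyloForest.parent {α : Type} {X : Finset α} (A : PhyloForest α X)
    (x : α) : A.V :=
  parentIn A.G (A.label x)

/-- A list of vertices forms a path in `G`: consecutive vertices are adjacent
and all vertices are distinct. -/
def IsVertexPath {V : Type} (G : SimpleGraph V) (P : List V) : Prop :=
  P.Chain' G.Adj ∧ P.Nodup

/-- `K = (ℓ₁, …, ℓₙ)` is an `n`-chain with respect to the graph `G` and the
labelling `lab`: the taxa are distinct, `n ≥ 2`, and either
`(p_{ℓ₁}, …, p_{ℓₙ})` is a path, or `p_{ℓ₁} = p_{ℓ₂}` and `(p_{ℓ₂}, …, p_{ℓₙ})`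
is a path, or `p_{ℓ_{n-1}} = p_{ℓₙ}` and `(p_{ℓ₁}, …, p_{ℓ_{n-1}})` is a path
(the last case is phrased via the reversed list; a reversed path is a path). -/
def IsChainIn {α V : Type} (G : SimpleGraph V) (lab : α → V) (K : List α) : Prop :=
  2 ≤ K.length ∧ K.Nodup ∧
    (IsVertexPath G (K.map fun x => parentIn G (lab x)) ∨
      (∃ p q Q, K.map (fun x => parentIn G (lab x)) = p :: q :: Q ∧ p = q ∧
        IsVertexPath G (q :: Q)) ∨
      (∃ p q Q, (K.map fun x => parentIn G (lab x)).reverse = p :: q :: Q ∧ p = q ∧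
        IsVertexPath G (q :: Q)))

/-- `K` is an `n`-chain of the phylogenetic forest `A` (i.e. of one of its
trees). -/
def PhyloForest.IsChain {α : Type} {X : Finset α} (A : PhyloForest α X)
    (K : List α) : Prop :=
  (∀ x ∈ K, x ∈ X) ∧ IsChainIn A.G A.label K

/-- The chain `K` is pendant: `p_{ℓ₁} = p_{ℓ₂}` or `p_{ℓ_{n-1}} = p_{ℓₙ}`. -/
def IsPendantIn {α V : Type} (G : SimpleGraph V) (lab : α → V) (K : List α) : Prop :=
  (∃ x y L, K = x :: y :: L ∧ parentIn G (lab x) = parentIn G (lab y)) ∨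
  (∃ x y L, K.reverse = x :: y :: L ∧ parentIn G (lab x) = parentIn G (lab y))

/-- The chain `K` is pendant in the phylogenetic forest `A`. -/
def PhyloForest.ChainPendant {α : Type} {X : Finset α} (A : PhyloForest α X)
    (K : List α) : Prop :=
  IsPendantIn A.G A.label K

/-- The set of vertices lying on some path between `x` and `y` in `G`
(in a tree: the vertices of the unique path from `x` to `y`). -/
def vertsBetween {V : Type} (G : SimpleGraph V) (x y : V) : Set V :=
  {w | ∃ p : G.Walk x y, p.IsPath ∧ w ∈ p.support}

/-- The vertex set of the embedding `A[U]`: the minimal subtree of `A`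
connecting the leaves labelled by `U` (the union of all pairwise paths). -/
def embed {α : Type} {X : Finset α} (A : PhyloForest α X) (U : Finset α) :
    Set A.V :=
  ⋃ x ∈ U, ⋃ y ∈ U, vertsBetween A.G (A.label x) (A.label y)

/-- The embedding `A[U]` uses the edge `{u,v}`. -/
def embedUsesEdge {α : Type} {X : Finset α} (A : PhyloForest α X) (U : Finset α)
    (u v : A.V) : Prop :=
  ∃ x ∈ U, ∃ y ∈ U, ∃ p : A.G.Walk (A.label x) (A.label y),
    p.IsPath ∧ s(u, v) ∈ p.edges

/-- `A` displays the quartet `wx|yz`: the path between (the leaves labelled)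
`w` and `x` is vertex-disjoint from the path between `y` and `z`. -/
def Quartet {α : Type} {X : Finset α} (A : PhyloForest α X) (w x y z : α) : Prop :=
  Disjoint (vertsBetween A.G (A.label w) (A.label x))
    (vertsBetween A.G (A.label y) (A.label z))

/-- `A|U = B|U`: the restrictions of `A` and `B` to the taxon set `U` are equal
(as phylogenetic trees up to label-preserving isomorphism), encoded by the
classical equivalent condition that all quartet topologies on `U` agree. -/
def SameTopology {α : Type} {X : Finset α} (A B : PhyloForest α X)
    (U : Finset α) : Prop :=
  ∀ w x y z : α, w ∈ U → x ∈ U → y ∈ U → z ∈ U → ([w, x, y, z] : List α).Nodup →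
    (Quartet A w x y z ↔ Quartet B w x y z)

/-- All taxa of `U` lie in the same tree (connected component) of the forest
`A`. -/
def InOneTree {α : Type} {X : Finset α} (A : PhyloForest α X) (U : Finset α) : Prop :=
  ∀ x ∈ U, ∀ y ∈ U, A.G.Reachable (A.label x) (A.label y)

/-- `F` is a partition of the taxon set `X` (into nonempty blocks). -/
def IsPartitionOn {α : Type} (X : Finset α) (F : Finset (Finset α)) : Prop :=
  (∀ U ∈ F, U ⊆ X ∧ U.Nonempty) ∧
  (∀ U ∈ F, ∀ W ∈ F, U ≠ W → Disjoint U W) ∧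
  (∀ x ∈ X, ∃ U ∈ F, x ∈ U)

/-- `F` is an agreement forest for `A` and `B`: a partition of `X`, refining
the partition of `X` given by the trees of `A` and of `B`, such that
`A|U = B|U` for every block `U`, and the embeddings of distinct blocks are
vertex-disjoint in `A` and in `B`.  (When `A` and `B` are trees the refinement
conditions hold trivially and this is exactly the notion of an agreement
forest for two trees; when `B` is a forest these are exactly the agreement
forests reachable by cutting edges in `B`.) -/
def IsAgreementForest {α : Type} {X : Finset α} (A B : PhyloForest α X)
    (F : Finset (Finset α)) : Prop :=
  IsPartitionOn X F ∧
  (∀ U ∈ F, InOneTree A U ∧ InOneTree B U) ∧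
  (∀ U ∈ F, SameTopology A B U) ∧
  ∀ U ∈ F, ∀ W ∈ F, U ≠ W →
    Disjoint (embed A U) (embed A W) ∧ Disjoint (embed B U) (embed B W)

/-- `F` is a maximum agreement forest (an agreement forest of minimum size,
the size being the number of blocks). -/
def IsMAF {α : Type} {X : Finset α} (A B : PhyloForest α X)
    (F : Finset (Finset α)) : Prop :=
  IsAgreementForest A B F ∧
    ∀ F₂ : Finset (Finset α), IsAgreementForest A B F₂ → F.card ≤ F₂.card

/-- The partition `F` preserves the taxon set `K`: all taxa of `K` lie in a
single block of `F`. -/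
def Preserves {α : Type} (F : Finset (Finset α)) (K : Finset α) : Prop :=
  ∃ U ∈ F, K ⊆ U

/-- `{p, q}` is a cherry of `A`: two distinct taxa with a common parent. -/
def IsCherry {α : Type} {X : Finset α} (A : PhyloForest α X) (p q : α) : Prop :=
  p ≠ q ∧ p ∈ X ∧ q ∈ X ∧ A.parent p = A.parent q

/-- `A` has a 2-2-2 star on `a,b,c,d,e,f`: `(a,b)`, `(c,d)`, `(e,f)` are
2-chains and there is a vertex `v` whose three neighbours are exactly
`p_a, p_c, p_e` (pairwise distinct) and which is distinct from
`p_b, p_d, p_f`. -/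
def Star222 {α : Type} {X : Finset α} (A : PhyloForest α X)
    (a b c d e f : α) : Prop :=
  A.IsChain [a, b] ∧ A.IsChain [c, d] ∧ A.IsChain [e, f] ∧
  A.parent a ≠ A.parent c ∧ A.parent a ≠ A.parent e ∧ A.parent c ≠ A.parent e ∧
  ∃ v : A.V, A.G.neighborSet v = {A.parent a, A.parent c, A.parent e} ∧
    v ≠ A.parent b ∧ v ≠ A.parent d ∧ v ≠ A.parent f

/-- `A` has a 2-2-1 star on `a,b,c,d,e`: `(a,b)` and `(c,d)` are 2-chains and
there is a vertex `v` whose three neighbours are exactly `p_a, p_c, p_e`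
(pairwise distinct) and which is distinct from `p_b` and `p_d`. -/
def Star221 {α : Type} {X : Finset α} (A : PhyloForest α X)
    (a b c d e : α) : Prop :=
  A.IsChain [a, b] ∧ A.IsChain [c, d] ∧ e ∈ X ∧
  A.parent a ≠ A.parent c ∧ A.parent a ≠ A.parent e ∧ A.parent c ≠ A.parent e ∧
  ∃ v : A.V, A.G.neighborSet v = {A.parent a, A.parent c, A.parent e} ∧
    v ≠ A.parent b ∧ v ≠ A.parent d

/-- `A` has a 2-1-1 star on `a,b,c,d`: `(a,b)` is a 2-chain and there is a
vertex `v` whose three neighbours are exactly `p_a, p_c, p_d` (pairwise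
distinct) and which is distinct from `p_b`. -/
def Star211 {α : Type} {X : Finset α} (A : PhyloForest α X)
    (a b c d : α) : Prop :=
  A.IsChain [a, b] ∧ c ∈ X ∧ d ∈ X ∧
  A.parent a ≠ A.parent c ∧ A.parent a ≠ A.parent d ∧ A.parent c ≠ A.parent d ∧
  ∃ v : A.V, A.G.neighborSet v = {A.parent a, A.parent c, A.parent d} ∧
    v ≠ A.parent b

/-- The vertices on the `u`-side after deleting the edge `{u,v}`:
the pendant subtree detached by removing that edge (in a tree). -/
def pendantSide {V : Type} (G : SimpleGraph V) (u v : V) : Set V :=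
  {w | (G.deleteEdges {s(u, v)}).Reachable u w}

/-- The graph obtained from `G` by restricting to the vertex set `C` and
suppressing the degree-2 vertex `v`: vertices of `C` are adjacent if they were
adjacent in `G`, or if they are distinct common neighbours of `v`. -/
def suppressAt {V : Type} (G : SimpleGraph V) (C : Set V) (v : V) :
    SimpleGraph V where
  Adj x y := x ∈ C ∧ y ∈ C ∧ (G.Adj x y ∨ (G.Adj x v ∧ G.Adj v y ∧ x ≠ y))
  symm := by
    constructor
    rintro x y ⟨hx, hy, h | ⟨h1, h2, h3⟩⟩
    · exact ⟨hy, hx, Or.inl h.symm⟩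
    · exact ⟨hy, hx, Or.inr ⟨h2.symm, h1.symm, h3.symm⟩⟩
  loopless := by
    constructor
    rintro x ⟨-, -, h | ⟨-, -, h⟩⟩
    · exact G.irrefl h
    · exact h rfl

/-- `T` has an interrupted 4-chain `(a,b,c,d)` with interrupter edge `{u,v}`
and interrupter-subtree taxon set `B`: removing the edge `{u,v}` detaches a
pendant subtree (the `u`-side) whose taxon set is exactly `B`, with
`∅ ≠ B ⊆ X ∖ {a,b,c,d}`; the endpoint `v` outside the pendant subtree lies on
the path of `T` between `p_b` and `p_c`; and `(a,b,c,d)` is a 4-chain of the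
tree obtained from `T` by deleting the pendant subtree together with the edge
`{u,v}` and suppressing the resulting degree-2 vertex `v`. -/
def HasInterrupter {α : Type} {X : Finset α} (T : PhyloForest α X)
    (a b c d : α) (B : Finset α) (u v : T.V) : Prop :=
  a ∈ X ∧ b ∈ X ∧ c ∈ X ∧ d ∈ X ∧
  B.Nonempty ∧ (↑B : Set α) ⊆ (↑X : Set α) \ {a, b, c, d} ∧
  T.G.Adj u v ∧ v ∉ pendantSide T.G u v ∧
  (∀ x ∈ X, (T.label x ∈ pendantSide T.G u v ↔ x ∈ B)) ∧
  v ∈ vertsBetween T.G (T.parent b) (T.parent c) ∧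
  IsChainIn (suppressAt T.G ((pendantSide T.G u v)ᶜ \ {v}) v) T.label [a, b, c, d]



/-! ### Auxiliary lemmas -/

section Aux

open SimpleGraph

variable {V : Type} {G : SimpleGraph V}

lemma not_leaf_of_two [Finite V] {l s t : V} (hs : G.Adj l s) (ht : G.Adj l t)
    (hst : s ≠ t) (hl : (G.neighborSet l).ncard ≤ 1) : False := by
  have : 1 < (G.neighborSet l).ncard :=
    (Set.one_lt_ncard (Set.toFinite _)).mpr ⟨s, hs, t, ht, hst⟩
  omega

lemma leaf_support [Finite V] {l : V}
    (hl : (G.neighborSet l).ncard ≤ 1) :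
    ∀ {s t : V} (p : G.Walk s t), p.IsPath → l ∈ p.support → l = s ∨ l = t := by
  intro s t p
  induction p with
  | nil =>
    intro _ hm
    rw [SimpleGraph.Walk.support_nil, List.mem_singleton] at hm
    exact Or.inl hm
  | @cons s s' t h q ih =>
    intro hp hm
    rw [SimpleGraph.Walk.support_cons, List.mem_cons] at hm
    rcases hm with rfl | hm
    · exact Or.inl rfl
    · have hp' := (SimpleGraph.Walk.cons_isPath_iff h q).mp hp
      rcases ih hp'.1 hm with rfl | rfl
      · cases q with
        | nil => exact Or.inr rfl
        | @cons _ w _ h2 q2 =>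
          exfalso
          have hw : w ∈ (SimpleGraph.Walk.cons h2 q2).support := by
            rw [SimpleGraph.Walk.support_cons]
            exact List.mem_cons_of_mem _ q2.start_mem_support
          exact not_leaf_of_two h.symm h2 (fun hsw => hp'.2 (hsw ▸ hw)) hl
      · exact Or.inr rfl

lemma path_eq (hac : G.IsAcyclic) {s t : V} {p q : G.Walk s t}
    (hp : p.IsPath) (hq : q.IsPath) : p = q :=
  congrArg Subtype.val (hac.path_unique ⟨p, hp⟩ ⟨q, hq⟩)

lemma append_isPath {s m t : V} {p : G.Walk s m} {q : G.Walk m t}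
    (hp : p.IsPath) (hq : q.IsPath)
    (hj : ∀ y, y ∈ p.support → y ∈ q.support → y = m) :
    (p.append q).IsPath := by
  rw [SimpleGraph.Walk.isPath_def, SimpleGraph.Walk.support_append, List.nodup_append']
  refine ⟨hp.support_nodup, ?_, ?_⟩
  · exact hq.support_nodup.sublist (List.tail_sublist _)
  · intro y hy1 hy2
    have hyq : y ∈ q.support := List.mem_of_mem_tail hy2
    have : y = m := hj y hy1 hyq
    subst this
    have := hq.support_nodup
    rw [SimpleGraph.Walk.support_eq_cons] at this
    exact (List.nodup_cons.mp this).1 hy2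

lemma attach [Finite V] [DecidableEq V] (hac : G.IsAcyclic) {s p l z q : V}
    (R : G.Walk s p) (hR : R.IsPath) (hsp : s ≠ p)
    (hN : ∀ y, G.Adj p y → y = l ∨ y = z ∨ y = q)
    (hl : (G.neighborSet l).ncard ≤ 1) (hsl : s ≠ l)
    (hzq : z ≠ q) (hqp : G.Adj q p) :
    (∃ R' : G.Walk s z, R'.IsPath ∧ p ∉ R'.support ∧ q ∉ R'.support ∧
        ∀ y ∈ R'.support, y ∈ R.support) ∨
    (∃ R' : G.Walk s q, R'.IsPath ∧ p ∉ R'.support ∧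
        ∀ y ∈ R'.support, y ∈ R.support) := by
  obtain ⟨w, h0, Q', hQ'⟩ := SimpleGraph.Walk.exists_eq_cons_of_ne (Ne.symm hsp) R.reverse
  have hRe : R = Q'.reverse.concat h0.symm := by
    have := congrArg SimpleGraph.Walk.reverse hQ'
    rwa [SimpleGraph.Walk.reverse_reverse, SimpleGraph.Walk.reverse_cons] at this
  set Q : G.Walk s w := Q'.reverse with hQdef
  have h' : G.Adj w p := h0.symm
  have hsupp : R.support = Q.support ++ [p] := by
    rw [hRe, SimpleGraph.Walk.support_concat]
  have hnd : (Q.support ++ [p]).Nodup := by rw [← hsupp]; exact hR.support_nodup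
  have hQnd : Q.support.Nodup := (List.nodup_append'.mp hnd).1
  have hpQ : p ∉ Q.support := by
    intro hmem
    exact (List.nodup_append'.mp hnd).2.2 hmem (List.mem_singleton_self p)
  have hQpath : Q.IsPath := (SimpleGraph.Walk.isPath_def Q).mpr hQnd
  have hQsub : ∀ y ∈ Q.support, y ∈ R.support := by
    intro y hy; rw [hsupp]; exact List.mem_append_left _ hy
  rcases hN w (h'.symm) with rfl | rfl | rfl
  · -- w = l : impossible, l leaf with two distinct neighbors
    exfalso
    obtain ⟨w₂, h02, Q₂', hQ₂'⟩ := SimpleGraph.Walk.exists_eq_cons_of_ne (Ne.symm hsl) Q.reverse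
    have hw₂ : w₂ ∈ Q.support := by
      have : w₂ ∈ Q.reverse.support := by
        rw [hQ₂', SimpleGraph.Walk.support_cons]
        exact List.mem_cons_of_mem _ Q₂'.start_mem_support
      rwa [SimpleGraph.Walk.support_reverse, List.mem_reverse] at this
    exact not_leaf_of_two h02 h' (fun hh => hpQ (hh ▸ hw₂)) hl
  · -- w = z
    left
    refine ⟨Q, hQpath, hpQ, ?_, hQsub⟩
    intro hqQ
    have hD : (Q.dropUntil q hqQ).IsPath := hQpath.dropUntil hqQ
    have hE : (SimpleGraph.Walk.cons hqp (SimpleGraph.Walk.cons h'.symm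
        SimpleGraph.Walk.nil)).IsPath := by
      rw [SimpleGraph.Walk.isPath_def]
      simp [hqp.ne, (Ne.symm hzq), h'.ne']
    have heq := path_eq hac hD hE
    have hpD : p ∈ (Q.dropUntil q hqQ).support := by
      rw [heq]; simp
    exact hpQ (SimpleGraph.Walk.support_dropUntil_subset Q hqQ hpD)
  · -- w = q
    right
    exact ⟨Q, hQpath, hpQ, hQsub⟩

lemma split_reach {u v : V} :
    ∀ {s t : V} (w : G.Walk s t), w.IsTrail → s(u, v) ∈ w.edges →
      ((G.deleteEdges {s(u, v)}).Reachable s u ∧ (G.deleteEdges {s(u, v)}).Reachable v t) ∨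
      ((G.deleteEdges {s(u, v)}).Reachable s v ∧ (G.deleteEdges {s(u, v)}).Reachable u t) := by
  intro s t w
  induction w with
  | nil => intro _ he; simp at he
  | @cons s s₁ t h q ih =>
    intro htr he
    rw [SimpleGraph.Walk.edges_cons, List.mem_cons] at he
    by_cases hfirst : s(s, s₁) = s(u, v)
    · have hq : ∀ e ∈ q.edges, e ∉ ({s(u, v)} : Set (Sym2 V)) := by
        intro e he' hmem
        rw [Set.mem_singleton_iff] at hmem
        subst hmem
        rw [← hfirst] at he'
        rw [SimpleGraph.Walk.isTrail_cons] at htr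
        exact htr.2 he'
      have hreach : (G.deleteEdges {s(u, v)}).Reachable s₁ t :=
        ⟨q.toDeleteEdges _ hq⟩
      rcases Sym2.eq_iff.mp hfirst with ⟨rfl, rfl⟩ | ⟨rfl, rfl⟩
      · exact Or.inl ⟨SimpleGraph.Reachable.refl _, hreach⟩
      · exact Or.inr ⟨SimpleGraph.Reachable.refl _, hreach⟩
    · have he' : s(u, v) ∈ q.edges := by
        rcases he with he | he
        · exact absurd he.symm hfirst
        · exact he
      have hadj : (G.deleteEdges {s(u, v)}).Adj s s₁ := by
        rw [SimpleGraph.deleteEdges_adj]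
        exact ⟨h, by simpa using hfirst⟩
      rcases ih ((SimpleGraph.Walk.isTrail_cons h q).mp htr).1 he' with ⟨h1, h2⟩ | ⟨h1, h2⟩
      · exact Or.inl ⟨hadj.reachable.trans h1, h2⟩
      · exact Or.inr ⟨hadj.reachable.trans h1, h2⟩

lemma cover3 [Finite V] {S : Set V} (h3 : S.ncard = 3) {a b c : V}
    (ha : a ∈ S) (hb : b ∈ S) (hc : c ∈ S)
    (hab : a ≠ b) (hac : a ≠ c) (hbc : b ≠ c) :
    ∀ y ∈ S, y = a ∨ y = b ∨ y = c := by
  have hsub : ({a, b, c} : Set V) ⊆ S := by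
    intro y hy
    rcases hy with rfl | rfl | rfl
    exacts [ha, hb, hc]
  have hcard : ({a, b, c} : Set V).ncard = 3 :=
    Set.ncard_eq_three.mpr ⟨a, b, c, hab, hac, hbc, rfl⟩
  have := Set.eq_of_subset_of_ncard_le hsub (by rw [h3, hcard]) (Set.toFinite S)
  intro y hy
  rw [← this] at hy
  simpa using hy

lemma closed_pair {s t : V} (hs : G.neighborSet s ⊆ {t}) (ht : G.neighborSet t ⊆ {s}) :
    ∀ {z r : V} (_ : G.Walk z r), z = s ∨ z = t → r = s ∨ r = t := by
  intro z r w
  induction w with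
  | nil => exact id
  | @cons z z₁ r h q ih =>
    intro hz
    apply ih
    rcases hz with rfl | rfl
    · exact Or.inr (hs h)
    · exact Or.inl (ht h)

lemma ncard_le_one_subset [Finite V] {S : Set V} (h1 : S.ncard ≤ 1) {m : V}
    (hm : m ∈ S) : S ⊆ {m} := by
  intro w hw
  by_contra hne
  rw [Set.mem_singleton_iff] at hne
  have : 1 < S.ncard := (Set.one_lt_ncard (Set.toFinite _)).mpr ⟨w, hw, m, hm, hne⟩
  omega


lemma vB_eq (hac : G.IsAcyclic) {s t : V} {p : G.Walk s t} (hp : p.IsPath) :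
    vertsBetween G s t = {w | w ∈ p.support} := by
  ext w
  constructor
  · rintro ⟨q, hq, hw⟩
    rwa [path_eq hac hq hp] at hw
  · intro hw
    exact ⟨p, hp, hw⟩

end Aux

section ForestLemmas

open SimpleGraph

variable {α : Type} {X : Finset α}

lemma label_mem (A : PhyloForest α X) {y : α} (hy : y ∈ X) :
    A.label y ∈ A.label '' (↑X : Set α) := ⟨y, by exact_mod_cast hy, rfl⟩

lemma label_leaf (A : PhyloForest α X) {y : α} (hy : y ∈ X) :
    (A.G.neighborSet (A.label y)).ncard ≤ 1 := by
  have hm := label_mem A hy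
  rw [A.leaves_eq] at hm
  exact hm

lemma label_ne (A : PhyloForest α X) {y z : α} (hy : y ∈ X) (hz : z ∈ X)
    (hyz : y ≠ z) : A.label y ≠ A.label z := fun h =>
  hyz (A.label_injOn (by exact_mod_cast hy) (by exact_mod_cast hz) h)

lemma parent_adj (A : PhyloForest α X) (hc : A.G.Connected) {y r₁ r₂ : α}
    (hy : y ∈ X) (h1 : r₁ ∈ X) (h2 : r₂ ∈ X) (h12 : r₁ ≠ r₂) :
    A.G.Adj (A.label y) (A.parent y) := by
  have hex : ∃ w, A.G.Adj (A.label y) w := by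
    obtain ⟨z, hz, hzy⟩ : ∃ z ∈ X, z ≠ y := by
      by_cases h : r₁ = y
      · exact ⟨r₂, h2, fun hh => h12 (by rw [h, hh])⟩
      · exact ⟨r₁, h1, h⟩
    have hne : A.label y ≠ A.label z := label_ne A hy hz (Ne.symm hzy)
    obtain ⟨w⟩ := hc.preconnected (A.label y) (A.label z)
    obtain ⟨w₁, hadj, _, _⟩ := SimpleGraph.Walk.exists_eq_cons_of_ne hne w
    exact ⟨w₁, hadj⟩
  show A.G.Adj (A.label y) (parentIn A.G (A.label y))
  unfold parentIn
  split
  · next h => exact h.choose_spec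
  · next h => exact absurd hex h

lemma parent_not_leaf (A : PhyloForest α X) (hc : A.G.Connected)
    {y r₁ r₂ r₃ : α} (hy : y ∈ X) (h1 : r₁ ∈ X) (h2 : r₂ ∈ X) (h3 : r₃ ∈ X)
    (h12 : r₁ ≠ r₂) (h13 : r₁ ≠ r₃) (h23 : r₂ ≠ r₃) :
    A.parent y ∉ A.label '' (↑X : Set α) := by
  haveI := A.fintV
  rintro ⟨z, hzX, hz⟩
  have hzX' : z ∈ X := by exact_mod_cast hzX
  have hadj : A.G.Adj (A.label y) (A.parent y) := parent_adj A hc hy h1 h2 h12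
  have hzy : z ≠ y := by
    rintro rfl
    exact A.G.loopless.irrefl _ (hz ▸ hadj)
  have hNz : A.G.neighborSet (A.label z) ⊆ {A.label y} :=
    ncard_le_one_subset (label_leaf A hzX')
      (show A.G.Adj (A.label z) (A.label y) from hz ▸ hadj.symm)
  have hNy : A.G.neighborSet (A.label y) ⊆ {A.label z} :=
    ncard_le_one_subset (label_leaf A hy)
      (show A.G.Adj (A.label y) (A.label z) from hz ▸ hadj)
  obtain ⟨w, hwX, hwy, hwz⟩ : ∃ w ∈ X, w ≠ y ∧ w ≠ z := by
    by_contra hcon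
    push_neg at hcon
    have e1 := hcon r₁ h1
    have e2 := hcon r₂ h2
    have e3 := hcon r₃ h3
    by_cases k1 : r₁ = y <;> by_cases k2 : r₂ = y <;> by_cases k3 : r₃ = y <;>
      simp_all
  obtain ⟨wk⟩ := hc.preconnected (A.label y) (A.label w)
  rcases closed_pair hNy hNz wk (Or.inl rfl) with h | h
  · exact label_ne A hwX hy hwy h
  · exact label_ne A hwX hzX' hwz h

end ForestLemmas

section Endgame

open SimpleGraph

variable {V : Type} {G : SimpleGraph V}

lemma finish_quartet [Finite V] (hac : G.IsAcyclic) {lx la lb lc pb pc z : V}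
    (R' : G.Walk lx z) (hR' : R'.IsPath) (hpb : pb ∉ R'.support) (hpc : pc ∉ R'.support)
    (S : G.Walk z la) (hS : S.IsPath) (hSsupp : ∀ y ∈ S.support, y = z ∨ y = la)
    {lb' lc' : V} (Wbc : G.Walk lb' lc') (hWbc : Wbc.IsPath)
    (hWsupp : ∀ y ∈ Wbc.support, y = lb ∨ y = pb ∨ y = pc ∨ y = lc)
    (hla : (G.neighborSet la).ncard ≤ 1)
    (hlb : (G.neighborSet lb).ncard ≤ 1)
    (hlc : (G.neighborSet lc).ncard ≤ 1)
    (hax : la ≠ lx) (hab : la ≠ lb) (hac2 : la ≠ lc) (hapb : la ≠ pb) (hapc : la ≠ pc)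
    (hbx : lb ≠ lx) (hbz : lb ≠ z) (hcx : lc ≠ lx) (hcz : lc ≠ z)
    (hzpb : z ≠ pb) (hzpc : z ≠ pc)
    (H : ¬ Disjoint (vertsBetween G lx la) (vertsBetween G lb' lc')) : False := by
  have hjunction : ∀ y, y ∈ R'.support → y ∈ S.support → y = z := by
    intro y h1 h2
    rcases hSsupp y h2 with rfl | rfl
    · rfl
    · rcases leaf_support hla R' hR' h1 with h | h
      · exact absurd h hax
      · exact h
  have hP : (R'.append S).IsPath := append_isPath hR' hS hjunction
  apply H
  rw [vB_eq hac hP, vB_eq hac hWbc, Set.disjoint_left]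
  intro y hy1 hy2
  simp only [Set.mem_setOf_eq] at hy1 hy2
  rw [SimpleGraph.Walk.mem_support_append_iff] at hy1
  have hyS : y ∈ R'.support ∨ y = z ∨ y = la := by
    rcases hy1 with h | h
    · exact Or.inl h
    · exact Or.inr (hSsupp y h)
  rcases hWsupp y hy2 with rfl | rfl | rfl | rfl
  · rcases hyS with h | rfl | rfl
    · rcases leaf_support hlb R' hR' h with h' | h'
      · exact hbx h'
      · exact hbz h'
    · exact hbz rfl
    · exact hab rfl
  · rcases hyS with h | rfl | rfl
    · exact hpb h
    · exact hzpb rfl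
    · exact hapb rfl
  · rcases hyS with h | rfl | rfl
    · exact hpc h
    · exact hzpc rfl
    · exact hapc rfl
  · rcases hyS with h | rfl | rfl
    · rcases leaf_support hlc R' hR' h with h' | h'
      · exact hcx h'
      · exact hcz h'
    · exact hcz rfl
    · exact hac2 rfl

lemma endgame [Finite V] [DecidableEq V] (hac : G.IsAcyclic)
    {lx la lb lc ld pb pc zb zc : V}
    (Sa : G.Walk zb la) (hSa : Sa.IsPath) (hSasupp : ∀ y ∈ Sa.support, y = zb ∨ y = la)
    (Sd : G.Walk zc ld) (hSd : Sd.IsPath) (hSdsupp : ∀ y ∈ Sd.support, y = zc ∨ y = ld)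
    (hadj_b : G.Adj lb pb) (hadj_c : G.Adj lc pc) (hbc : G.Adj pb pc)
    (hNb : ∀ y, G.Adj pb y → y = lb ∨ y = zb ∨ y = pc)
    (hNc : ∀ y, G.Adj pc y → y = lc ∨ y = zc ∨ y = pb)
    (hla : (G.neighborSet la).ncard ≤ 1)
    (hlb : (G.neighborSet lb).ncard ≤ 1)
    (hlc : (G.neighborSet lc).ncard ≤ 1)
    (hld : (G.neighborSet ld).ncard ≤ 1)
    (hxpb : lx ≠ pb) (hxpc : lx ≠ pc)
    (n1 : la ≠ lx) (n2 : la ≠ lb) (n3 : la ≠ lc) (n4 : la ≠ pb) (n5 : la ≠ pc)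
    (n6 : ld ≠ lx) (n7 : ld ≠ lb) (n8 : ld ≠ lc) (n9 : ld ≠ pb) (n10 : ld ≠ pc)
    (n11 : lb ≠ lx) (n12 : lc ≠ lx) (n13 : lb ≠ pc) (n14 : lc ≠ pb) (n15 : lb ≠ lc)
    (n16 : zb ≠ lb) (n17 : zb ≠ lc) (n18 : zb ≠ pc) (n22 : zb ≠ pb)
    (n19 : zc ≠ lb) (n20 : zc ≠ lc) (n21 : zc ≠ pb) (n23 : zc ≠ pc)
    (hreach : G.Reachable lx pb)
    (H1 : ¬ Disjoint (vertsBetween G lx la) (vertsBetween G lb lc))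
    (H2 : ¬ Disjoint (vertsBetween G lx ld) (vertsBetween G lb lc)) : False := by
  obtain ⟨W0⟩ := hreach
  set R : G.Walk lx pb := (W0.toPath : G.Path lx pb).val with hRdef
  have hR : R.IsPath := W0.toPath.2
  set Wbc : G.Walk lb lc :=
    SimpleGraph.Walk.cons hadj_b (SimpleGraph.Walk.cons hbc
      (SimpleGraph.Walk.cons hadj_c.symm SimpleGraph.Walk.nil)) with hWdef
  have hWbc : Wbc.IsPath := by
    rw [hWdef, SimpleGraph.Walk.isPath_def]
    simp [hadj_b.ne, n13, n15, hbc.ne, Ne.symm n14, hadj_c.ne']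
  have hWsupp : ∀ y ∈ Wbc.support, y = lb ∨ y = pb ∨ y = pc ∨ y = lc := by
    intro y hy
    rw [hWdef] at hy
    simp only [SimpleGraph.Walk.support_cons, SimpleGraph.Walk.support_nil,
      List.mem_cons, List.mem_singleton] at hy
    tauto
  rcases attach hac R hR hxpb hNb hlb (Ne.symm n11) n18 hbc.symm with
    ⟨R', hR', hp1, hq1, _⟩ | ⟨R', hR', hp1, hsub1⟩
  · exact finish_quartet hac R' hR' hp1 hq1 Sa hSa hSasupp Wbc hWbc hWsupp hla hlb hlc
      n1 n2 n3 n4 n5 n11 (Ne.symm n16) n12 (Ne.symm n17) n22 n18 H1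
  · rcases attach hac R' hR' hxpc hNc hlc (Ne.symm n12) n21 hbc with
      ⟨R'', hR'', hp2, hq2, _⟩ | ⟨R'', _, _, hsub2⟩
    · exact finish_quartet hac R'' hR'' hq2 hp2 Sd hSd hSdsupp Wbc hWbc hWsupp hld hlb hlc
        n6 n7 n8 n9 n10 n11 (Ne.symm n19) n12 (Ne.symm n20) n21 n23 H2
    · exact hp1 (hsub2 pb R''.end_mem_support)

end Endgame

section TPrime

open SimpleGraph

lemma tprime_contra {α : Type} {X : Finset α} (A : PhyloForest α X)
    (hc : A.G.Connected)
    {x a b c d : α} (hx : x ∈ X) (ha : a ∈ X) (hb : b ∈ X) (hcm : c ∈ X) (hd : d ∈ X)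
    (hxa : x ≠ a) (hxb : x ≠ b) (hxc : x ≠ c) (hxd : x ≠ d)
    (hab : a ≠ b) (hac : a ≠ c) (had : a ≠ d) (hbc : b ≠ c) (hbd : b ≠ d) (hcd : c ≠ d)
    (hchain : IsChainIn A.G A.label [a, b, c, d])
    (H1 : ¬ Quartet A x a b c) (H2 : ¬ Quartet A x d b c) : False := by
  haveI := A.fintV
  classical
  obtain ⟨-, -, hcases⟩ := hchain
  simp only [List.map_cons, List.map_nil] at hcases
  have hPa : A.G.Adj (A.label a) (parentIn A.G (A.label a)) := parent_adj A hc ha ha hb hab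
  have hPb : A.G.Adj (A.label b) (parentIn A.G (A.label b)) := parent_adj A hc hb ha hb hab
  have hPc : A.G.Adj (A.label c) (parentIn A.G (A.label c)) := parent_adj A hc hcm ha hb hab
  have hPd : A.G.Adj (A.label d) (parentIn A.G (A.label d)) := parent_adj A hc hd ha hb hab
  have hIa : parentIn A.G (A.label a) ∉ A.label '' (↑X : Set α) :=
    parent_not_leaf A hc ha ha hb hcm hab hac hbc
  have hIb : parentIn A.G (A.label b) ∉ A.label '' (↑X : Set α) :=
    parent_not_leaf A hc hb ha hb hcm hab hac hbc
  have hIc : parentIn A.G (A.label c) ∉ A.label '' (↑X : Set α) :=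
    parent_not_leaf A hc hcm ha hb hcm hab hac hbc
  have hId : parentIn A.G (A.label d) ∉ A.label '' (↑X : Set α) :=
    parent_not_leaf A hc hd ha hb hcm hab hac hbc
  have hDb : (A.G.neighborSet (parentIn A.G (A.label b))).ncard = 3 := A.internal_deg _ hIb
  have hDc : (A.G.neighborSet (parentIn A.G (A.label c))).ncard = 3 := A.internal_deg _ hIc
  have lne : ∀ {y z : α}, y ∈ X → z ∈ X → y ≠ z → A.label y ≠ A.label z :=
    fun hy hz hyz => label_ne A hy hz hyz
  have lpne : ∀ {y : α} {w : A.V}, y ∈ X → w ∉ A.label '' (↑X : Set α) →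
      A.label y ≠ w := by
    intro y w hy hI h
    exact hI (h ▸ label_mem A hy)
  have hreach : A.G.Reachable (A.label x) (parentIn A.G (A.label b)) :=
    hc.preconnected _ _
  rcases hcases with ⟨hch, hnd⟩ | ⟨p₀, q₀, Q₀, heq, hpq, hpath⟩ |
    ⟨p₀, q₀, Q₀, heq, hpq, hpath⟩
  · -- main case: path (pa, pb, pc, pd)
    simp only [List.Chain', List.isChain_cons_cons, List.isChain_singleton, and_true] at hch
    obtain ⟨hab', hbc', hcd'⟩ := hch
    simp only [List.nodup_cons, List.mem_cons, List.mem_singleton, List.not_mem_nil,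
      not_or, List.nodup_nil, not_false_eq_true, and_true] at hnd
    obtain ⟨⟨nab, nac, nad⟩, ⟨nbc', nbd'⟩, ncd'⟩ := hnd
    have hNb : ∀ y, A.G.Adj (parentIn A.G (A.label b)) y →
        y = A.label b ∨ y = parentIn A.G (A.label a) ∨ y = parentIn A.G (A.label c) := by
      intro y hy
      exact cover3 hDb hPb.symm hab'.symm hbc'
        (lpne hb hIa) (lpne hb hIc) nac y hy
    have hNc : ∀ y, A.G.Adj (parentIn A.G (A.label c)) y →
        y = A.label c ∨ y = parentIn A.G (A.label d) ∨ y = parentIn A.G (A.label b) := by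
      intro y hy
      exact cover3 hDc hPc.symm hcd' hbc'.symm
        (lpne hcm hId) (lpne hcm hIb) (Ne.symm nbd') y hy
    exact endgame A.acyclic
      (SimpleGraph.Walk.cons hPa.symm SimpleGraph.Walk.nil)
      (by rw [SimpleGraph.Walk.isPath_def]; simp [hPa.ne'])
      (by intro y hy; simpa using hy)
      (SimpleGraph.Walk.cons hPd.symm SimpleGraph.Walk.nil)
      (by rw [SimpleGraph.Walk.isPath_def]; simp [hPd.ne'])
      (by intro y hy; simpa using hy)
      hPb hPc hbc' hNb hNc
      (label_leaf A ha) (label_leaf A hb) (label_leaf A hcm) (label_leaf A hd)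
      (lpne hx hIb) (lpne hx hIc)
      (lne ha hx hxa.symm) (lne ha hb hab) (lne ha hcm hac) (lpne ha hIb) (lpne ha hIc)
      (lne hd hx hxd.symm) (lne hd hb hbd.symm) (lne hd hcm hcd.symm) (lpne hd hIb)
      (lpne hd hIc)
      (lne hb hx hxb.symm) (lne hcm hx hxc.symm) (lpne hb hIc) (lpne hcm hIb)
      (lne hb hcm hbc)
      (Ne.symm (lpne hb hIa)) (Ne.symm (lpne hcm hIa)) nac nab
      (Ne.symm (lpne hb hId)) (Ne.symm (lpne hcm hId)) (Ne.symm nbd') (Ne.symm ncd')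
      hreach H1 H2
  · -- pendant case p_a = p_b
    simp only [List.cons.injEq] at heq
    obtain ⟨h1, h2, h3⟩ := heq
    subst h1
    subst h2
    rw [← h3] at hpath
    obtain ⟨hch, hnd⟩ := hpath
    simp only [List.Chain', List.isChain_cons_cons, List.isChain_singleton, and_true] at hch
    obtain ⟨hbc', hcd'⟩ := hch
    simp only [List.nodup_cons, List.mem_cons, List.mem_singleton, List.not_mem_nil,
      not_or, List.nodup_nil, not_false_eq_true, and_true] at hnd
    obtain ⟨⟨nbc', nbd'⟩, ncd'⟩ := hnd
    have hpbla : A.G.Adj (parentIn A.G (A.label b)) (A.label a) := by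
      rw [← hpq]; exact hPa.symm
    have hNb : ∀ y, A.G.Adj (parentIn A.G (A.label b)) y →
        y = A.label b ∨ y = A.label a ∨ y = parentIn A.G (A.label c) := by
      intro y hy
      exact cover3 hDb hPb.symm hpbla hbc'
        (lne hb ha hab.symm) (lpne hb hIc) (lpne ha hIc) y hy
    have hNc : ∀ y, A.G.Adj (parentIn A.G (A.label c)) y →
        y = A.label c ∨ y = parentIn A.G (A.label d) ∨ y = parentIn A.G (A.label b) := by
      intro y hy
      exact cover3 hDc hPc.symm hcd' hbc'.symm
        (lpne hcm hId) (lpne hcm hIb) (Ne.symm nbd') y hy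
    exact endgame A.acyclic
      (SimpleGraph.Walk.nil : A.G.Walk (A.label a) (A.label a))
      SimpleGraph.Walk.IsPath.nil
      (by intro y hy; simpa using hy)
      (SimpleGraph.Walk.cons hPd.symm SimpleGraph.Walk.nil)
      (by rw [SimpleGraph.Walk.isPath_def]; simp [hPd.ne'])
      (by intro y hy; simpa using hy)
      hPb hPc hbc' hNb hNc
      (label_leaf A ha) (label_leaf A hb) (label_leaf A hcm) (label_leaf A hd)
      (lpne hx hIb) (lpne hx hIc)
      (lne ha hx hxa.symm) (lne ha hb hab) (lne ha hcm hac) (lpne ha hIb) (lpne ha hIc)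
      (lne hd hx hxd.symm) (lne hd hb hbd.symm) (lne hd hcm hcd.symm) (lpne hd hIb)
      (lpne hd hIc)
      (lne hb hx hxb.symm) (lne hcm hx hxc.symm) (lpne hb hIc) (lpne hcm hIb)
      (lne hb hcm hbc)
      (lne ha hb hab) (lne ha hcm hac) (lpne ha hIc) (lpne ha hIb)
      (Ne.symm (lpne hb hId)) (Ne.symm (lpne hcm hId)) (Ne.symm nbd') (Ne.symm ncd')
      hreach H1 H2
  · -- pendant case p_c = p_d
    simp only [List.reverse_cons, List.reverse_nil, List.nil_append, List.cons_append,
      List.append_assoc, List.singleton_append, List.cons.injEq] at heq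
    obtain ⟨h1, h2, h3⟩ := heq
    subst h1
    subst h2
    rw [← h3] at hpath
    obtain ⟨hch, hnd⟩ := hpath
    simp only [List.Chain', List.isChain_cons_cons, List.isChain_singleton, and_true] at hch
    obtain ⟨hcb', hba'⟩ := hch
    simp only [List.nodup_cons, List.mem_cons, List.mem_singleton, List.not_mem_nil,
      not_or, List.nodup_nil, not_false_eq_true, and_true] at hnd
    obtain ⟨⟨ncb', nca'⟩, nba'⟩ := hnd
    have hpcld : A.G.Adj (parentIn A.G (A.label c)) (A.label d) := by
      rw [← hpq]; exact hPd.symm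
    have hNb : ∀ y, A.G.Adj (parentIn A.G (A.label b)) y →
        y = A.label b ∨ y = parentIn A.G (A.label a) ∨ y = parentIn A.G (A.label c) := by
      intro y hy
      exact cover3 hDb hPb.symm hba' hcb'.symm
        (lpne hb hIa) (lpne hb hIc) (fun h => nca' h.symm) y hy
    have hNc : ∀ y, A.G.Adj (parentIn A.G (A.label c)) y →
        y = A.label c ∨ y = A.label d ∨ y = parentIn A.G (A.label b) := by
      intro y hy
      exact cover3 hDc hPc.symm hpcld hcb'
        (lne hcm hd hcd) (lpne hcm hIb) (lpne hd hIb) y hy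
    exact endgame A.acyclic
      (SimpleGraph.Walk.cons hPa.symm SimpleGraph.Walk.nil)
      (by rw [SimpleGraph.Walk.isPath_def]; simp [hPa.ne'])
      (by intro y hy; simpa using hy)
      (SimpleGraph.Walk.nil : A.G.Walk (A.label d) (A.label d))
      SimpleGraph.Walk.IsPath.nil
      (by intro y hy; simpa using hy)
      hPb hPc hcb'.symm hNb hNc
      (label_leaf A ha) (label_leaf A hb) (label_leaf A hcm) (label_leaf A hd)
      (lpne hx hIb) (lpne hx hIc)
      (lne ha hx hxa.symm) (lne ha hb hab) (lne ha hcm hac) (lpne ha hIb) (lpne ha hIc)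
      (lne hd hx hxd.symm) (lne hd hb hbd.symm) (lne hd hcm hcd.symm) (lpne hd hIb)
      (lpne hd hIc)
      (lne hb hx hxb.symm) (lne hcm hx hxc.symm) (lpne hb hIc) (lpne hcm hIb)
      (lne hb hcm hbc)
      (Ne.symm (lpne hb hIa)) (Ne.symm (lpne hcm hIa)) (Ne.symm nca') (Ne.symm nba')
      (lne hd hb hbd.symm) (lne hd hcm hcd.symm) (lpne hd hIb) (lpne hd hIc)
      hreach H1 H2

end TPrime




/-- Let `T` and `T'` be unrooted binary phylogenetic trees on
a taxon set `X` that have an interrupted 4-chain `(a,b,c,d)` with interrupter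
edge `{u,v}` and interrupter-subtree taxon set `B`, and let `F` be an
agreement forest for `T` and `T'` with a block `U` such that
`{a,b,c,d} ⊆ U`.  Then `U ∩ B = ∅`; consequently the embedding `T[U]` does not
use the interrupter edge. -/
theorem chain_block_avoids_interrupter
    {α : Type} [DecidableEq α] {X : Finset α}
    (T T' : PhyloForest α X) (hT : T.IsTree) (hT' : T'.IsTree)
    (a b c d : α) (B : Finset α) (u v : T.V)
    (hchain' : T'.IsChain [a, b, c, d])
    (hint : HasInterrupter T a b c d B u v)
    (F : Finset (Finset α)) (hF : IsAgreementForest T T' F)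
    (U : Finset α) (hU : U ∈ F) (habcd : ({a, b, c, d} : Finset α) ⊆ U) :
    (∀ x ∈ U, x ∉ B) ∧ ¬ embedUsesEdge T U u v := by
  classical
  haveI := T.fintV
  haveI := T'.fintV
  obtain ⟨hpart, -, hsame, -⟩ := hF
  obtain ⟨haX, hbX, hcX, hdX, hBne, hBsub, huv, hvnot, hlabB, hvbc, -⟩ := hint
  have hUX : U ⊆ X := (hpart.1 U hU).1
  have haU : a ∈ U := habcd (by simp)
  have hbU : b ∈ U := habcd (by simp)
  have hcU : c ∈ U := habcd (by simp)
  have hdU : d ∈ U := habcd (by simp)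
  have hnd4 : ([a, b, c, d] : List α).Nodup := hchain'.2.2.1
  simp only [List.nodup_cons, List.mem_cons, List.mem_singleton, List.not_mem_nil,
    not_or, List.nodup_nil, not_false_eq_true, and_true] at hnd4
  obtain ⟨⟨hab, hac, had⟩, ⟨hbc, hbd⟩, hcd⟩ := hnd4
  have haB : a ∉ B := fun h => by have := (hBsub h).2; simp at this
  have hdB : d ∉ B := fun h => by have := (hBsub h).2; simp at this
  have part1 : ∀ x ∈ U, x ∉ B := by
    intro x hxU hxB
    have hxXB := hBsub (show (x : α) ∈ (↑B : Set α) from hxB)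
    have hxX : x ∈ X := hxXB.1
    have hxne : ¬(x = a ∨ x = b ∨ x = c ∨ x = d) := by
      have := hxXB.2
      simpa using this
    push_neg at hxne
    obtain ⟨hxa, hxb2, hxc2, hxd2⟩ := hxne
    obtain ⟨P, hP, hvP⟩ := hvbc
    have hPb : T.G.Adj (T.label b) (T.parent b) := parent_adj T hT hbX haX hbX hab
    have hPc : T.G.Adj (T.label c) (T.parent c) := parent_adj T hT hcX haX hbX hab
    have hIb : T.parent b ∉ T.label '' (↑X : Set α) :=
      parent_not_leaf T hT hbX haX hbX hcX hab hac hbc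
    have hIc : T.parent c ∉ T.label '' (↑X : Set α) :=
      parent_not_leaf T hT hcX haX hbX hcX hab hac hbc
    have lpne : ∀ {y : α} {w : T.V}, y ∈ X → w ∉ T.label '' (↑X : Set α) →
        T.label y ≠ w := by
      intro y w hy hI h
      exact hI (h ▸ label_mem T hy)
    set W : T.G.Walk (T.label b) (T.label c) :=
      SimpleGraph.Walk.cons hPb (P.concat hPc.symm) with hWdef
    have hWpath : W.IsPath := by
      rw [hWdef, SimpleGraph.Walk.isPath_def, SimpleGraph.Walk.support_cons,
        SimpleGraph.Walk.support_concat, List.nodup_cons,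
        List.nodup_append']
      refine ⟨?_, hP.support_nodup, by simp, ?_⟩
      · rw [List.mem_append, List.mem_singleton]
        rintro (h | h)
        · rcases leaf_support (label_leaf T hbX) P hP h with h' | h'
          · exact lpne hbX hIb h'
          · exact lpne hbX hIc h'
        · exact label_ne T hbX hcX hbc h
      · intro y hy hy2
        rw [List.mem_singleton] at hy2
        subst hy2
        rcases leaf_support (label_leaf T hcX) P hP hy with h' | h'
        · exact lpne hcX hIb h'
        · exact lpne hcX hIc h'
    have hv_bc : v ∈ vertsBetween T.G (T.label b) (T.label c) := by
      refine ⟨W, hWpath, ?_⟩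
      rw [hWdef, SimpleGraph.Walk.support_cons, SimpleGraph.Walk.support_concat]
      exact List.mem_cons_of_mem _ (List.mem_append_left _ hvP)
    have hv_gen : ∀ {y : α}, y ∈ X → y ∉ B →
        v ∈ vertsBetween T.G (T.label x) (T.label y) := by
      intro y hyX hyB
      obtain ⟨W0⟩ := hT.preconnected (T.label x) (T.label y)
      refine ⟨W0.toPath.val, W0.toPath.2, ?_⟩
      by_contra hv
      have hnoe : ∀ e ∈ (W0.toPath.val).edges, e ∉ ({s(u, v)} : Set (Sym2 T.V)) := by
        intro e he hmem
        rw [Set.mem_singleton_iff] at hmem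
        subst hmem
        exact hv (SimpleGraph.Walk.snd_mem_support_of_mem_edges _ he)
      have hreach : (T.G.deleteEdges {s(u, v)}).Reachable (T.label x) (T.label y) :=
        ⟨(W0.toPath.val).toDeleteEdges _ hnoe⟩
      have hxPS : (T.G.deleteEdges {s(u, v)}).Reachable u (T.label x) :=
        (hlabB x hxX).mpr hxB
      exact hyB ((hlabB y hyX).mp (hxPS.trans hreach))
    have hQ1T : ¬ Quartet T x a b c := fun hdis =>
      Set.disjoint_left.mp hdis (hv_gen haX haB) hv_bc
    have hQ2T : ¬ Quartet T x d b c := fun hdis =>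
      Set.disjoint_left.mp hdis (hv_gen hdX hdB) hv_bc
    have hQ1 : ¬ Quartet T' x a b c := fun h =>
      hQ1T ((hsame U hU x a b c hxU haU hbU hcU
        (by simp [hxa, hxb2, hxc2, hab, hac, hbc])).mpr h)
    have hQ2 : ¬ Quartet T' x d b c := fun h =>
      hQ2T ((hsame U hU x d b c hxU hdU hbU hcU
        (by simp [hxd2, hxb2, hxc2, Ne.symm hbd, Ne.symm hcd, hbc])).mpr h)
    exact tprime_contra T' hT' hxX haX hbX hcX hdX hxa hxb2 hxc2 hxd2
      hab hac had hbc hbd hcd hchain'.2 hQ1 hQ2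
  refine ⟨part1, ?_⟩
  rintro ⟨y₁, hy₁U, y₂, hy₂U, p, hp, he⟩
  rcases split_reach p hp.isTrail he with ⟨r1, r2⟩ | ⟨r1, r2⟩
  · exact part1 _ hy₁U ((hlabB y₁ (hUX hy₁U)).mp r1.symm)
  · exact part1 _ hy₂U ((hlabB y₂ (hUX hy₂U)).mp r2)

end Phylo
end

section
/- Let T be an unrooted binary phylogenetic tree on a taxon set X, let F' be a forest on X, let {p,q} be a cherry of T, and let F be an agreement forest for (T,F'). Then {p} is a block of F, or {q} is a block of F, or p and q lie in the same block of F; moreover, in the last case p and q lie in the taxon set of the same tree of F'. -/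
/-!
Common definitions for formalizing statements about maximum agreement forests
of unrooted binary phylogenetic trees.

An unrooted binary phylogenetic forest on a taxon set `X` is modelled as a
finite acyclic simple graph together with a labelling of taxa by vertices,
such that the vertices of degree ≤ 1 are exactly the (injectively) labelled
leaves and every other vertex has degree 3.  A tree is a connected forest.
Two phylogenetic trees on the same taxon set are regarded as equal when there
is a label-preserving isomorphism; accordingly, the condition `T|U = T'|U`
(equality of the restrictions obtained by suppressing degree-2 vertices) is
encoded by the classical equivalent condition that `T` and `T'` induce the
same quartet topologies on `U` (for binary trees on a common leaf set,
equality of restrictions is equivalent to agreement of all quartets, where a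
quartet `wx|yz` holds iff the path from `w` to `x` is vertex-disjoint from
the path from `y` to `z`).
-/

namespace Phylo

lemma adj_eq_parentIn {V : Type} (G : SimpleGraph V) {ℓ w : V}
    (hfin : (G.neighborSet ℓ).Finite)
    (hle : (G.neighborSet ℓ).ncard ≤ 1) (h : G.Adj ℓ w) : w = parentIn G ℓ := by
  unfold parentIn
  have hex : ∃ w, G.Adj ℓ w := ⟨w, h⟩
  rw [dif_pos hex]
  have h2 : G.Adj ℓ hex.choose := hex.choose_spec
  exact (Set.ncard_le_one hfin).mp hle w h hex.choose h2

lemma parent_mem_embed {α : Type} [DecidableEq α] {X : Finset α}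
    (T : PhyloForest α X) {U : Finset α} {p x : α}
    (hp : p ∈ U) (hx : x ∈ U) (hpX : p ∈ X) (hxX : x ∈ X) (hne : p ≠ x)
    (hreach : T.G.Reachable (T.label p) (T.label x)) :
    T.parent p ∈ embed T U := by
  letI := T.fintV
  letI : DecidableEq T.V := Classical.decEq _
  have hl : T.label p ≠ T.label x := fun h => hne (T.label_injOn hpX hxX h)
  obtain ⟨wk⟩ := hreach
  set pth := wk.toPath with hpth
  obtain ⟨w', hadj, q, hq⟩ := SimpleGraph.Walk.exists_eq_cons_of_ne hl pth.val
  have hle : (T.G.neighborSet (T.label p)).ncard ≤ 1 := by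
    have : T.label p ∈ T.label '' (↑X : Set α) := ⟨p, hpX, rfl⟩
    rw [T.leaves_eq] at this
    exact this
  have hw' : w' = T.parent p := adj_eq_parentIn T.G (Set.toFinite _) hle hadj
  have hmem : T.parent p ∈ vertsBetween T.G (T.label p) (T.label x) := by
    refine ⟨pth.val, pth.property, ?_⟩
    rw [hq, SimpleGraph.Walk.support_cons, ← hw']
    exact List.mem_cons_of_mem _ q.start_mem_support
  simp only [embed, Set.mem_iUnion]
  exact ⟨p, hp, x, hx, hmem⟩

/-- Let `T` be an unrooted binary phylogenetic tree on a
taxon set `X`, let `F'` be a forest on `X`, let `{p,q}` be a cherry of `T`,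
and let `F` be an agreement forest for `(T, F')`.  Then `{p}` is a block of
`F`, or `{q}` is a block of `F`, or `p` and `q` lie in the same block of `F`;
moreover, in the last case `p` and `q` lie in the taxon set of the same tree
of `F'`. -/
theorem cherry_trichotomy
    {α : Type} [DecidableEq α] {X : Finset α}
    (T F' : PhyloForest α X) (hT : T.IsTree)
    (p q : α) (hcherry : IsCherry T p q)
    (F : Finset (Finset α)) (hF : IsAgreementForest T F' F) :
    ({p} : Finset α) ∈ F ∨ ({q} : Finset α) ∈ F ∨
      ∃ U ∈ F, p ∈ U ∧ q ∈ U ∧ F'.G.Reachable (F'.label p) (F'.label q) := by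
  obtain ⟨hpq, hpX, hqX, hpar⟩ := hcherry
  obtain ⟨⟨hblocks, hdisj, hcover⟩, honetree, _, hembdisj⟩ := hF
  obtain ⟨U, hU, hpU⟩ := hcover p hpX
  obtain ⟨W, hW, hqW⟩ := hcover q hqX
  by_cases hUW : U = W
  · subst hUW
    exact Or.inr (Or.inr ⟨U, hU, hpU, hqW, (honetree U hU).2 p hpU q hqW⟩)
  · by_cases hUp : U = {p}
    · exact Or.inl (hUp ▸ hU)
    by_cases hWq : W = {q}
    · exact Or.inr (Or.inl (hWq ▸ hW))
    exfalso
    have hx : ∃ x ∈ U, x ≠ p := by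
      by_contra h; push_neg at h
      exact hUp (Finset.eq_singleton_iff_unique_mem.mpr ⟨hpU, h⟩)
    have hy : ∃ y ∈ W, y ≠ q := by
      by_contra h; push_neg at h
      exact hWq (Finset.eq_singleton_iff_unique_mem.mpr ⟨hqW, h⟩)
    obtain ⟨x, hxU, hxp⟩ := hx
    obtain ⟨y, hyW, hyq⟩ := hy
    have h1 : T.parent p ∈ embed T U :=
      parent_mem_embed T hpU hxU hpX ((hblocks U hU).1 hxU) (Ne.symm hxp)
        ((honetree U hU).1 p hpU x hxU)
    have h2 : T.parent q ∈ embed T W :=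
      parent_mem_embed T hqW hyW hqX ((hblocks W hW).1 hyW) (Ne.symm hyq)
        ((honetree W hW).1 q hqW y hyW)
    exact Set.disjoint_left.mp (hembdisj U hU W hW hUW).1 h1 (hpar ▸ h2)

end Phylo
end
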